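/- Let V be a finite-dimensional normed complex vector space and φ a linear endomorphism of V. Suppose there exist constants C > 0 and r > 0 such that the operator norm satisfies ‖φ^m‖ ≤ C · r^m for every integer m ≥ 1, and suppose every eigenvalue λ of φ satisfies |λ| = r. Then φ is diagonalizable (semisimple), i.e., V admits a basis consisting of eigenvectors of φ. -/

import Mathlib

open Module

/-- Let `V` be a finite-dimensional normed complex vector space and `φ` a
(continuous) linear endomorphism of `V` with `‖φ^m‖ ≤ C * r^m` for all `m ≥ 1`, where
`C > 0`, `r > 0`. If every eigenvalue `μ` of `φ` satisfies `|μ| = r`, then `φ` is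
diagonalizable: `V` admits a basis consisting of eigenvectors of `φ`. -/
theorem stmt6 {V : Type*} [NormedAddCommGroup V] [NormedSpace ℂ V] [FiniteDimensional ℂ V]
    (φ : V →L[ℂ] V) (C r : ℝ) (hC : 0 < C) (hr : 0 < r)
    (hbound : ∀ m : ℕ, 1 ≤ m → ‖φ ^ m‖ ≤ C * r ^ m)
    (heig : ∀ μ : ℂ, Module.End.HasEigenvalue (φ : V →ₗ[ℂ] V) μ → ‖μ‖ = r) :
    ∃ b : Module.Basis (Fin (Module.finrank ℂ V)) ℂ V,
      ∀ i, ∃ μ : ℂ, φ (b i) = μ • b i := by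
  classical
  set f : Module.End ℂ V := (φ : V →ₗ[ℂ] V) with hf
  -- Step 1: ker (f - μ)^2 ≤ ker (f - μ) for every μ
  have key : ∀ μ : ℂ, LinearMap.ker ((f - μ • 1) ^ 2) ≤ LinearMap.ker (f - μ • 1) := by
    intro μ v hv
    rw [LinearMap.mem_ker]
    by_contra hw0
    set w : V := (f - μ • 1) v with hwdef
    have hfw : (f - μ • 1) w = 0 := by
      have h2 := LinearMap.mem_ker.mp hv
      rw [pow_two, Module.End.mul_apply] at h2
      exact h2
    have hweig : f w = μ • w := by
      have := hfw
      simp only [LinearMap.sub_apply, LinearMap.smul_apply, Module.End.one_apply,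
        sub_eq_zero] at this
      exact this
    have hveq : f v = μ • v + w := by
      simp only [hwdef, LinearMap.sub_apply, LinearMap.smul_apply, Module.End.one_apply]
      abel
    -- μ is an eigenvalue
    have habs : ‖μ‖ = r := by
      refine heig μ (Module.End.hasEigenvalue_of_hasEigenvector (x := w) ?_)
      exact ⟨Module.End.mem_eigenspace_iff.mpr hweig, hw0⟩
    -- powers formula
    have hpow : ∀ m : ℕ, (f ^ (m + 1)) v = μ ^ (m + 1) • v + (((m : ℂ) + 1) * μ ^ m) • w := by
      intro m
      induction m with
      | zero => simpa using hveq
      | succ m ih =>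
        have : (f ^ (m + 2)) v = f ((f ^ (m + 1)) v) := by
          rw [← Module.End.mul_apply, ← pow_succ']
        rw [this, ih]
        simp only [map_add, map_smul, hveq, hweig, smul_add, smul_smul]
        push_cast
        match_scalars <;> ring
    -- norm estimate for each m
    have hwnorm : 0 < ‖w‖ := norm_pos_iff.mpr hw0
    have hineq : ∀ m : ℕ, ((m : ℝ) + 1) * ‖w‖ ≤ (C + 1) * r * ‖v‖ := by
      intro m
      have h1 : ‖(f ^ (m + 1)) v‖ ≤ C * r ^ (m + 1) * ‖v‖ := by
        have hco : (f ^ (m + 1)) v = (φ ^ (m + 1)) v := by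
          rw [hf, ← ContinuousLinearMap.coe_pow]; rfl
        rw [hco]
        calc ‖(φ ^ (m + 1)) v‖ ≤ ‖φ ^ (m + 1)‖ * ‖v‖ := (φ ^ (m + 1)).le_opNorm v
          _ ≤ C * r ^ (m + 1) * ‖v‖ := by
            have := hbound (m + 1) (Nat.le_add_left 1 m)
            exact mul_le_mul_of_nonneg_right this (norm_nonneg v)
      have htri : ∀ a b : V, ‖b‖ - ‖a‖ ≤ ‖a + b‖ := by
        intro a b
        have h := norm_add_le (a + b) (-a)
        simp only [norm_neg] at h
        have hab : a + b + -a = b := by abel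
        rw [hab] at h
        linarith
      have hn1 : ‖(((m : ℂ) + 1) * μ ^ m) • w‖ = ((m : ℝ) + 1) * r ^ m * ‖w‖ := by
        rw [norm_smul, norm_mul, norm_pow, habs]
        have hna : ‖((m : ℂ) + 1)‖ = (m : ℝ) + 1 := by
          rw [show ((m : ℂ) + 1) = ((m + 1 : ℕ) : ℂ) by push_cast; ring]
          rw [Complex.norm_natCast]; push_cast; ring
        rw [hna]
      have hn2 : ‖μ ^ (m + 1) • v‖ = r ^ (m + 1) * ‖v‖ := by
        rw [norm_smul, norm_pow, habs]
      have h2 : (((m : ℝ) + 1) * r ^ m) * ‖w‖ - r ^ (m + 1) * ‖v‖ ≤ ‖(f ^ (m + 1)) v‖ := by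
        rw [hpow m]
        calc (((m : ℝ) + 1) * r ^ m) * ‖w‖ - r ^ (m + 1) * ‖v‖
            = ‖(((m : ℂ) + 1) * μ ^ m) • w‖ - ‖μ ^ (m + 1) • v‖ := by rw [hn1, hn2]
          _ ≤ ‖μ ^ (m + 1) • v + (((m : ℂ) + 1) * μ ^ m) • w‖ := htri _ _
      have h3 : (((m : ℝ) + 1) * r ^ m) * ‖w‖ ≤ (C + 1) * r ^ (m + 1) * ‖v‖ := by
        have := h2.trans h1
        nlinarith [pow_pos hr m, pow_pos hr (m+1), norm_nonneg v]
      have hrm : (0:ℝ) < r ^ m := pow_pos hr m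
      rw [pow_succ] at h3
      rw [← mul_le_mul_iff_of_pos_right hrm]
      nlinarith [h3]
    obtain ⟨m, hm⟩ := exists_nat_gt ((C + 1) * r * ‖v‖ / ‖w‖)
    have := hineq m
    have hmgt : (C + 1) * r * ‖v‖ < ((m : ℝ) + 1) * ‖w‖ := by
      have : (C + 1) * r * ‖v‖ < (m : ℝ) * ‖w‖ := by
        rw [div_lt_iff₀ hwnorm] at hm
        linarith
      nlinarith
    linarith
  -- Step 2: generalized eigenspaces equal eigenspaces
  have hmax : ∀ μ : ℂ, f.maxGenEigenspace μ = f.genEigenspace μ 1 := by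
    intro μ
    refine le_antisymm ?_ ((f.genEigenspace μ).monotone le_top)
    rw [Module.End.maxGenEigenspace, Module.End.genEigenspace_top]
    refine iSup_le fun k => ?_
    rw [Module.End.genEigenspace_nat, Module.End.genEigenspace_one]
    rcases k with _ | k
    · intro x hx
      simp only [pow_zero, LinearMap.mem_ker, Module.End.one_apply] at hx
      simp [hx]
    · have h12 : LinearMap.ker ((f - μ • 1) ^ 1) = LinearMap.ker ((f - μ • 1) ^ 2) := by
        refine le_antisymm ?_ (by simpa using key μ)
        intro x hx
        rw [LinearMap.mem_ker] at hx ⊢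
        rw [pow_one] at hx
        rw [pow_two, Module.End.mul_apply, hx, map_zero]
      have heq := Module.End.ker_pow_constant (f := f - μ • 1) (k := 1) h12 k
      rw [pow_one] at heq
      rw [add_comm k 1, ← heq]
  -- Step 3: internal direct sum of eigenspaces and collected basis
  have htop : ⨆ μ : ℂ, f.genEigenspace μ 1 = ⊤ := by
    have := Module.End.iSup_maxGenEigenspace_eq_top f
    simpa [hmax] using this
  have hindep := f.independent_genEigenspace 1
  have hInt : DirectSum.IsInternal (fun μ : ℂ => f.genEigenspace μ 1) :=
    DirectSum.isInternal_submodule_of_iSupIndep_of_iSup_eq_top hindep htop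
  let v : ∀ μ : ℂ, Basis (Module.Free.ChooseBasisIndex ℂ (f.genEigenspace μ 1)) ℂ
      (f.genEigenspace μ 1) := fun μ => Module.Free.chooseBasis ℂ _
  let b0 := hInt.collectedBasis v
  let e := b0.indexEquiv (Module.finBasis ℂ V)
  refine ⟨b0.reindex e, fun i => ?_⟩
  refine ⟨(e.symm i).1, ?_⟩
  have hmem : b0 (e.symm i) ∈ f.genEigenspace (e.symm i).1 1 :=
    hInt.collectedBasis_mem v (e.symm i)
  rw [Module.End.mem_genEigenspace_one] at hmem
  rw [Module.Basis.reindex_apply]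
  exact hmem
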